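/- Let s be the normalised Borda scoring function, and let p be an array of probability distributions over decompositions of the electorate such that p_{R,x} = p_{R',x} whenever R' is obtained from R by inverting every agent's ranking. Then the score-based DSF Δ^p_s satisfies Inversion Invariance. -/

import Mathlib

open scoped Classical

/-- A preference: a strict linear order on the set `X` of proposals, represented as a
ranking, i.e., a bijection assigning to every proposal its position (position `0` = top). -/
abbrev Pref (X : Type) [Fintype X] : Type := X ≃ Fin (Fintype.card X)

/-- A profile: a finite nonempty electorate `N ⊂ ℕ` together with a preference for each agent. -/
structure Profile (X : Type) [Fintype X] : Type where
  agents : Finset ℕ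
  agents_nonempty : agents.Nonempty
  pref : (i : ℕ) → i ∈ agents → Pref X

namespace Profile

variable {X : Type} [Fintype X]

/-- The position of proposal `x` in agent `i`'s ranking (top position is `1`). -/
def pos (R : Profile X) (i : ℕ) (hi : i ∈ R.agents) (x : X) : ℕ :=
  (R.pref i hi x : ℕ) + 1

/-- The profile `R ∘ σ`, obtained by relabelling agents via a bijection `σ : ℕ ≃ ℕ`;
it is defined on `σ⁻¹(N)`. -/
def comp (R : Profile X) (σ : ℕ ≃ ℕ) : Profile X where
  agents := R.agents.map σ.symm.toEmbedding
  agents_nonempty := by simpa using R.agents_nonempty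
  pref i hi := R.pref (σ i) (by
    obtain ⟨j, hj, hij⟩ := Finset.mem_map.mp hi
    simp only [Equiv.coe_toEmbedding] at hij
    subst hij
    simpa using hj)

/-- The profile `σ(R)`, obtained by applying a permutation `σ : X ≃ X` of the proposals
pointwise to every ranking (the position of `σ x` in `σ(R)` is the position of `x` in `R`). -/
def permute (R : Profile X) (σ : X ≃ X) : Profile X where
  agents := R.agents
  agents_nonempty := R.agents_nonempty
  pref i hi := σ.symm.trans (R.pref i hi)

/-- The profile obtained from `R` by inverting every agent's ranking. -/
def invert (R : Profile X) : Profile X where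
  agents := R.agents
  agents_nonempty := R.agents_nonempty
  pref i hi := (R.pref i hi).trans Fin.revPerm

/-- The profile `R^x̂`, obtained from `R` by moving proposal `x` to the top of every
agent's ranking (leaving the relative order of all other proposals unchanged). -/
def moveTop (R : Profile X) (x : X) : Profile X where
  agents := R.agents
  agents_nonempty := R.agents_nonempty
  pref i hi := (R.pref i hi).trans (Fin.cycleRange (R.pref i hi x))

/-- The restriction `R|_C` of profile `R` to a nonempty coalition `C ⊆ N`. -/
def restrict (R : Profile X) (C : Finset ℕ) (hne : C.Nonempty) (hsub : C ⊆ R.agents) :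
    Profile X where
  agents := C
  agents_nonempty := hne
  pref i hi := R.pref i (hsub hi)

/-- The union `R ⊕ R'` of two profiles with disjoint electorates. -/
def union (R R' : Profile X) (_h : Disjoint R.agents R'.agents) : Profile X where
  agents := R.agents ∪ R'.agents
  agents_nonempty := R.agents_nonempty.mono Finset.subset_union_left
  pref i hi :=
    if h1 : i ∈ R.agents then R.pref i h1
    else R'.pref i ((Finset.mem_union.mp hi).resolve_left h1)

/-- The number of agents in `R` reporting the preference `r`. -/
noncomputable def count (R : Profile X) (r : Pref X) : ℕ :=
  (R.agents.attach.filter fun i => R.pref i.1 i.2 = r).card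

/-- A profile is perfectly uniform if each possible preference occurs equally often in it. -/
def IsUniform (R : Profile X) : Prop := ∃ k : ℕ, ∀ r : Pref X, R.count r = k

/-- A profile is unanimous if all agents report the same ranking. -/
def IsUnanimous (R : Profile X) : Prop :=
  ∀ i (hi : i ∈ R.agents) j (hj : j ∈ R.agents), R.pref i hi = R.pref j hj

/-- Proposal `x` occurs in the same position in every agent's ranking in `R`. -/
def SamePos (R : Profile X) (x : X) : Prop :=
  ∀ i (hi : i ∈ R.agents) j (hj : j ∈ R.agents), R.pref i hi x = R.pref j hj x

/-- Proposal `x` is Pareto-dominated in `R`: some proposal `y` is ranked above `x`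
by every agent. -/
def ParetoDominated (R : Profile X) (x : X) : Prop :=
  ∃ y : X, ∀ i (hi : i ∈ R.agents), R.pref i hi y < R.pref i hi x

/-- Proposals `x` and `y` are clones in `R`: they are distinct and appear adjacent to one
another in every agent's ranking. -/
def Clones (R : Profile X) (x y : X) : Prop :=
  x ≠ y ∧ ∀ i (hi : i ∈ R.agents),
    (R.pref i hi x : ℕ) + 1 = (R.pref i hi y : ℕ) ∨
    (R.pref i hi y : ℕ) + 1 = (R.pref i hi x : ℕ)

end Profile

section Axioms

variable {X : Type} [Fintype X]

/-- A DSF (here: any map from profiles to sets of proposals) is proper if it always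
returns a nonempty set of proposals. -/
def IsDSF (Δ : Profile X → Set X) : Prop := ∀ R : Profile X, (Δ R).Nonempty

/-- Anonymity: `Δ(R) = Δ(R ∘ σ)` for every profile `R` and bijection `σ : ℕ ≃ ℕ`. -/
def Anonymity (Δ : Profile X → Set X) : Prop :=
  ∀ (R : Profile X) (σ : ℕ ≃ ℕ), Δ R = Δ (R.comp σ)

/-- Neutrality: `Δ(σ(R)) = σ(Δ(R))` for every profile `R` and permutation `σ : X ≃ X`. -/
def Neutrality (Δ : Profile X → Set X) : Prop :=
  ∀ (R : Profile X) (σ : X ≃ X), Δ (R.permute σ) = σ '' Δ R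

/-- Uniformity: `Δ(R) = X` for every perfectly uniform profile `R`. -/
def Uniformity (Δ : Profile X → Set X) : Prop :=
  ∀ R : Profile X, R.IsUniform → Δ R = Set.univ

/-- Weak Position Unanimity: if `x` occurs in the same position in every agent's ranking
in `R`, then `x ∉ Δ(R)` or `Δ(R) = X`. -/
def WeakPositionUnanimity (Δ : Profile X → Set X) : Prop :=
  ∀ (R : Profile X) (x : X), R.SamePos x → x ∉ Δ R ∨ Δ R = Set.univ

/-- Position Unanimity: if `R` is not unanimous and `x` occurs in the same position in
every agent's ranking in `R`, then `x ∉ Δ(R)`. -/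
def PositionUnanimity (Δ : Profile X → Set X) : Prop :=
  ∀ (R : Profile X) (x : X), ¬ R.IsUnanimous → R.SamePos x → x ∉ Δ R

/-- Pareto Efficiency: Pareto-dominated proposals are never selected. -/
def ParetoEfficiency (Δ : Profile X → Set X) : Prop :=
  ∀ (R : Profile X) (x : X), R.ParetoDominated x → x ∉ Δ R

/-- Weak Pareto Efficiency: for every Pareto-dominated proposal `x` of a profile `R`,
either `x ∉ Δ(R)` or `Δ(R) = X`. -/
def WeakParetoEfficiency (Δ : Profile X → Set X) : Prop :=
  ∀ (R : Profile X) (x : X), R.ParetoDominated x → x ∉ Δ R ∨ Δ R = Set.univ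

/-- Inversion Invariance: `Δ(R) = Δ(R')` whenever `R'` is obtained from `R` by inverting
every agent's ranking. -/
def InversionInvariance (Δ : Profile X → Set X) : Prop :=
  ∀ R : Profile X, Δ R = Δ R.invert

/-- Clone Consistency: if `x` and `x'` are clones in `R`, `x` and `y` are not clones in `R`,
and `{x,y} ⊆ Δ(R)`, then `x' ∈ Δ(R)`. -/
def CloneConsistency (Δ : Profile X → Set X) : Prop :=
  ∀ (R : Profile X) (x x' y : X), R.Clones x x' → ¬ R.Clones x y →
    x ∈ Δ R → y ∈ Δ R → x' ∈ Δ R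

/-- Uniform Reinforcement: `Δ(R) = Δ(R ⊕ R^U)` for every profile `R` and every perfectly
uniform profile `R^U` with electorate disjoint from that of `R`. -/
def UniformReinforcement (Δ : Profile X → Set X) : Prop :=
  ∀ (R RU : Profile X) (h : Disjoint R.agents RU.agents),
    RU.IsUniform → Δ R = Δ (R.union RU h)

end Axioms
section Score

variable {X : Type} [Fintype X]

/-- A scoring function `s` is normalised positional if it is induced by a scoring vector
`(s_1, ..., s_m)`: `s(R|_C, x) = (1/|C|) · Σ_{i ∈ C} s_{pos_i(x)}`. -/
def IsNormPositional (s : Profile X → X → ℝ) : Prop :=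
  ∃ v : Fin (Fintype.card X) → ℝ, ∀ (R : Profile X) (x : X),
    s R x = (∑ i ∈ R.agents.attach, v (R.pref i.1 i.2 x)) / R.agents.card

/-- `div_s(R, x, C, C̄)`: the absolute difference of the scores of `x` in the restrictions
of `R` to `C` and to its complement `C̄ = N \ C` (and `0` if either part is empty). -/
noncomputable def divScore (s : Profile X → X → ℝ) (R : Profile X) (x : X) (C : Finset ℕ) : ℝ :=
  if h : C ⊆ R.agents ∧ C.Nonempty ∧ (R.agents \ C).Nonempty then
    |s (R.restrict C h.2.1 h.1) x -
      s (R.restrict (R.agents \ C) h.2.2 Finset.sdiff_subset) x|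
  else 0

/-- `p` is an array of probability distributions over decompositions of the electorate:
for each profile `R` and proposal `x`, `p R x` is nonnegative and the values `p R x C`
over all `C ⊆ N` sum to `1`.  (Each unordered decomposition `{C, C̄}` thus receives
probability `p R x C + p R x C̄`.) -/
def IsDecompDist (p : Profile X → X → Finset ℕ → ℝ) : Prop :=
  ∀ (R : Profile X) (x : X),
    (∀ C, 0 ≤ p R x C) ∧ (∑ C ∈ R.agents.powerset, p R x C) = 1

/-- The score-based DSF `Δ^p_s`: it selects the proposals maximising the expected
score difference between the two parts of a sampled decomposition of the electorate. -/
noncomputable def scoreDSF (s : Profile X → X → ℝ) (p : Profile X → X → Finset ℕ → ℝ)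
    (R : Profile X) : Set X :=
  {x | ∀ y : X, (∑ C ∈ R.agents.powerset, p R y C * divScore s R y C)
      ≤ ∑ C ∈ R.agents.powerset, p R x C * divScore s R x C}

/-- The normalised Plurality scoring function (scoring vector `(1, 0, ..., 0)`). -/
noncomputable def pluralityScore (R : Profile X) (x : X) : ℝ :=
  ((R.agents.attach.filter fun i => (R.pref i.1 i.2 x : ℕ) = 0).card : ℝ) / R.agents.card

/-- The normalised Borda scoring function (scoring vector `(m-1, m-2, ..., 0)`). -/
noncomputable def normBordaScore (R : Profile X) (x : X) : ℝ :=
  (∑ i ∈ R.agents.attach,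
    ((Fintype.card X : ℝ) - (((R.pref i.1 i.2 x : ℕ) : ℝ) + 1))) / R.agents.card

end Score

section SCF

variable {X : Type} [Fintype X]

/-- A social choice function is Pareto-efficient if it never selects a Pareto-dominated
proposal. -/
def ParetoEfficientSCF (F : Profile X → Finset X) : Prop :=
  ∀ (R : Profile X) (x : X), R.ParetoDominated x → x ∉ F R

/-- `div_F(R, x, C, C̄) = | [x ∈ F(R|_C)]/|F(R|_C)| - [x ∈ F(R|_C̄)]/|F(R|_C̄)| |`
(and `0` if either part of the decomposition is empty). -/
noncomputable def divSCF (F : Profile X → Finset X) (R : Profile X) (x : X) (C : Finset ℕ) : ℝ :=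
  if h : C ⊆ R.agents ∧ C.Nonempty ∧ (R.agents \ C).Nonempty then
    |(if x ∈ F (R.restrict C h.2.1 h.1) then ((F (R.restrict C h.2.1 h.1)).card : ℝ)⁻¹ else 0) -
      (if x ∈ F (R.restrict (R.agents \ C) h.2.2 Finset.sdiff_subset) then
        ((F (R.restrict (R.agents \ C) h.2.2 Finset.sdiff_subset)).card : ℝ)⁻¹ else 0)|
  else 0

/-- The SCF-based DSF `Δ^p_F`. -/
noncomputable def scfDSF (F : Profile X → Finset X) (p : Profile X → X → Finset ℕ → ℝ)
    (R : Profile X) : Set X :=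
  {x | ∀ y : X, (∑ C ∈ R.agents.powerset, p R y C * divSCF F R y C)
      ≤ ∑ C ∈ R.agents.powerset, p R x C * divSCF F R x C}

/-- The Borda score of `x` in `R`: `Σ_{i ∈ N} (m − pos_i(x))`. -/
noncomputable def bordaScore (R : Profile X) (x : X) : ℕ :=
  ∑ i ∈ R.agents.attach, (Fintype.card X - R.pos i.1 i.2 x)

/-- The Borda rule: the SCF selecting the proposals with maximal Borda score. -/
noncomputable def bordaRule (R : Profile X) : Finset X :=
  Finset.univ.filter fun x => ∀ y : X, bordaScore R y ≤ bordaScore R x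

end SCF

section Index

variable {X : Type} [Fintype X]

/-- A profile index function `δ` is neutral if it is invariant under permutations
of the proposals. -/
def NeutralIndex (δ : Profile X → ℝ) : Prop :=
  ∀ (R : Profile X) (σ : X ≃ X), δ (R.permute σ) = δ R

/-- The profile-index-based DSF `Δ_δ`: it selects the proposals `x` minimising `δ(R^x̂)`. -/
noncomputable def indexDSF (δ : Profile X → ℝ) (R : Profile X) : Set X :=
  {x | ∀ y : X, δ (R.moveTop x) ≤ δ (R.moveTop y)}

/-- The Kendall tau distance between two rankings: the number of (unordered) pairs of
distinct proposals on whose relative ranking the two rankings disagree (counted here as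
ordered pairs with a fixed orientation of the disagreement). -/
noncomputable def kendallTau (r r' : Pref X) : ℕ :=
  (Finset.univ.filter fun q : X × X => r q.1 < r q.2 ∧ r' q.2 < r' q.1).card

/-- The average Kendall tau distance over all unordered pairs of distinct agents of the
profile (`0` for single-agent profiles), here computed via ordered pairs. -/
noncomputable def deltaKT (R : Profile X) : ℝ :=
  (∑ i ∈ R.agents.attach, ∑ j ∈ R.agents.attach,
      if i ≠ j then (kendallTau (R.pref i.1 i.2) (R.pref j.1 j.2) : ℝ) else 0) /
    ((R.agents.card : ℝ) * ((R.agents.card : ℝ) - 1))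

end Index

section RankVar

variable {X : Type} [Fintype X]

/-- The mean position `μ^R(x)` of proposal `x` in profile `R`. -/
noncomputable def meanPos (R : Profile X) (x : X) : ℝ :=
  (∑ i ∈ R.agents.attach, (R.pos i.1 i.2 x : ℝ)) / R.agents.card

/-- The variance of the positions at which proposal `x` occurs in profile `R`. -/
noncomputable def rankVar (R : Profile X) (x : X) : ℝ :=
  (∑ i ∈ R.agents.attach, ((R.pos i.1 i.2 x : ℝ) - meanPos R x) ^ 2) / R.agents.card

/-- The rank-variance DSF `Δ_var`. -/
noncomputable def rankVarDSF (R : Profile X) : Set X :=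
  {x | ∀ y : X, rankVar R y ≤ rankVar R x}

end RankVar

section Aux

variable {X : Type} [Fintype X]

lemma borda_restrict_invert (R : Profile X) (C : Finset ℕ) (hne : C.Nonempty)
    (hsub : C ⊆ R.agents) (x : X) :
    normBordaScore (R.invert.restrict C hne hsub) x
      = ((Fintype.card X : ℝ) - 1) - normBordaScore (R.restrict C hne hsub) x := by
  unfold normBordaScore Profile.restrict Profile.invert
  simp only
  have hCc : (C.card : ℝ) ≠ 0 := by
    exact_mod_cast Finset.card_ne_zero_of_mem hne.choose_spec
  rw [eq_sub_iff_add_eq, ← add_div, div_eq_iff hCc, ← Finset.sum_add_distrib]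
  have : ∀ i ∈ C.attach,
      ((Fintype.card X : ℝ) - (((((R.pref i.1 (hsub i.2)).trans Fin.revPerm) x : ℕ) : ℝ) + 1))
        + ((Fintype.card X : ℝ) - (((R.pref i.1 (hsub i.2) x : ℕ) : ℝ) + 1))
      = (Fintype.card X : ℝ) - 1 := by
    intro i _
    have hk := (R.pref i.1 (hsub i.2) x).isLt
    have : (((R.pref i.1 (hsub i.2)).trans Fin.revPerm) x : ℕ)
        = Fintype.card X - 1 - (R.pref i.1 (hsub i.2) x : ℕ) := by
      simp [Equiv.trans_apply, Fin.val_rev]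
      omega
    rw [this]
    have : ((Fintype.card X - 1 - (R.pref i.1 (hsub i.2) x : ℕ) : ℕ) : ℝ)
        = (Fintype.card X : ℝ) - 1 - ((R.pref i.1 (hsub i.2) x : ℕ) : ℝ) := by
      push_cast [Nat.cast_sub (by omega : (R.pref i.1 (hsub i.2) x : ℕ) ≤ Fintype.card X - 1),
        Nat.cast_sub (by omega : 1 ≤ Fintype.card X)]
      ring
    rw [this]; ring
  rw [Finset.sum_congr rfl this, Finset.sum_const, Finset.card_attach,
    nsmul_eq_mul, mul_comm]

lemma divScore_invert (R : Profile X) (x : X) (C : Finset ℕ) :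
    divScore normBordaScore R.invert x C = divScore normBordaScore R x C := by
  unfold divScore
  have e : ∀ a b c : ℝ, |(c - a) - (c - b)| = |a - b| := by
    intro a b c; rw [show (c - a) - (c - b) = -(a - b) by ring, abs_neg]
  split_ifs with h1 h2 h2
  · have a := borda_restrict_invert R C h2.2.1 h2.1 x
    have b := borda_restrict_invert R (R.agents \ C) h2.2.2 Finset.sdiff_subset x
    exact (congrArg (fun t : ℝ => |t|) (congrArg₂ (· - ·) a b)).trans (e _ _ _)
  · exact absurd h1 h2
  · exact absurd h2 h1
  · rfl

end Aux

/-- Let `s` be the normalised Borda scoring function and let `p` be an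
array of probability distributions over decompositions of the electorate such that
`p_{R,x} = p_{R',x}` whenever `R'` is obtained from `R` by inverting every agent's
ranking.  Then the score-based DSF `Δ^p_s` satisfies Inversion Invariance. -/
theorem divisiveness_stmt17 (X : Type) [Fintype X]
    (p : Profile X → X → Finset ℕ → ℝ) (hp : IsDecompDist p)
    (hpinv : ∀ (R : Profile X) (x : X) (C : Finset ℕ), p R x C = p R.invert x C) :
    InversionInvariance (scoreDSF normBordaScore p) := by
  intro R
  unfold scoreDSF
  have hag : R.invert.agents = R.agents := rfl
  have key : ∀ x : X, (∑ C ∈ R.agents.powerset, p R x C * divScore normBordaScore R x C)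
      = ∑ C ∈ R.invert.agents.powerset, p R.invert x C * divScore normBordaScore R.invert x C := by
    intro x
    rw [hag]
    refine Finset.sum_congr rfl fun C _ => ?_
    rw [← hpinv, divScore_invert]
  ext x
  simp only [Set.mem_setOf_eq]
  constructor
  · intro h y; rw [← key, ← key]; exact h y
  · intro h y; rw [key, key]; exact h y
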